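/- arXiv:2507.04105 — 2 statements merged into one kernel-verified Lean document; each statement's English description precedes it below -/
import Mathlib

section
/- Let d ≥ 1, σ > 0, and let μ be the isotropic Gaussian measure N(0, σ²I) on ℝ^d, given as the product of d copies of the one-dimensional Gaussian N(0, σ²). Let Y be a measurable space, f : ℝ^d → Y measurable, R ⊆ Y measurable, and fix z, δ ∈ ℝ^d and a real number b. If μ{ε : f(z + ε) ∈ R} ≤ Ψ(b), then μ{ε : f(z + δ + ε) ∈ R} ≤ Ψ(b + ‖δ‖₂/σ), where Ψ is the standard normal cumulative distribution function. -/
open MeasureTheory ProbabilityTheory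

/-- The standard normal cumulative distribution function `Ψ(x) = N(0,1)((-∞, x])`. -/
noncomputable def stdNormalCDF (x : ℝ) : ℝ :=
  ((gaussianReal 0 1) (Set.Iic x)).toReal

/-- The isotropic Gaussian measure `N(m, σ²I)` on `ℝ^d`, given as the product of `d` copies
of the one-dimensional Gaussian with mean the corresponding coordinate of `m`
and variance `σ²`. -/
noncomputable def isoGaussian (d : ℕ) (m : EuclideanSpace ℝ (Fin d)) (σ : ℝ) :
    Measure (EuclideanSpace ℝ (Fin d)) :=
  (Measure.pi fun i => gaussianReal (m i) ((σ ^ 2).toNNReal)).map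
    (MeasurableEquiv.toLp 2 (Fin d → ℝ))

open Real
open scoped NNReal ENNReal

section Auxiliary


lemma pdf_ratio (m : ℝ) {v : ℝ≥0} (hv : v ≠ 0) (x : ℝ) :
    gaussianPDFReal m v x = rexp (m * x / v - m ^ 2 / (2 * v)) * gaussianPDFReal 0 v x := by
  have hv' : (v : ℝ) ≠ 0 := by exact_mod_cast hv
  simp only [gaussianPDFReal, sub_zero]
  rw [mul_left_comm, ← Real.exp_add]
  congr 2
  field_simp
  ring

lemma gaussianReal_eq_withDensity (m : ℝ) {v : ℝ≥0} (hv : v ≠ 0) :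
    gaussianReal m v = (gaussianReal 0 v).withDensity
      (fun x => ENNReal.ofReal (rexp (m * x / v - m ^ 2 / (2 * v)))) := by
  rw [gaussianReal_of_var_ne_zero _ hv, gaussianReal_of_var_ne_zero _ hv,
    ← withDensity_mul _ (measurable_gaussianPDF 0 v) (by fun_prop)]
  congr 1
  ext x
  simp only [Pi.mul_apply, gaussianPDF]
  rw [← ENNReal.ofReal_mul (gaussianPDFReal_nonneg _ _ _), ← mul_comm, ← pdf_ratio m hv]

lemma prod_withDensity {α β : Type*} [MeasurableSpace α] [MeasurableSpace β]
    (μ : Measure α) (ν : Measure β) [SigmaFinite μ] [SigmaFinite ν]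
    {f : α → ℝ≥0∞} {g : β → ℝ≥0∞} (hf : Measurable f) (hg : Measurable g)
    [SigmaFinite (μ.withDensity f)] [SigmaFinite (ν.withDensity g)] :
    (μ.withDensity f).prod (ν.withDensity g)
      = (μ.prod ν).withDensity (fun p => f p.1 * g p.2) := by
  ext s hs
  rw [Measure.prod_apply hs, withDensity_apply _ hs]
  have hFm : Measurable (fun p : α × β => s.indicator (fun q => g q.2) p) :=
    (hg.comp measurable_snd).indicator hs
  have h1 : ∀ x, (ν.withDensity g) (Prod.mk x ⁻¹' s)
      = ∫⁻ y, s.indicator (fun q : α × β => g q.2) (x, y) ∂ν := by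
    intro x
    rw [withDensity_apply _ (measurable_prodMk_left hs),
      ← lintegral_indicator (measurable_prodMk_left hs)]
    refine lintegral_congr fun y => ?_
    by_cases h : (x, y) ∈ s <;> simp [Set.indicator, h, Set.mem_preimage]
  simp_rw [h1]
  rw [lintegral_withDensity_eq_lintegral_mul _ hf hFm.lintegral_prod_right']
  rw [← lintegral_indicator hs,
    lintegral_prod (fun p : α × β => s.indicator (fun q : α × β => f q.1 * g q.2) p)
      (((hf.comp measurable_fst).mul (hg.comp measurable_snd)).indicator hs).aemeasurable]
  congr 1
  ext x
  simp only [Pi.mul_apply]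
  have h2 : ∀ y, s.indicator (fun q : α × β => f q.1 * g q.2) (x, y)
      = f x * s.indicator (fun q : α × β => g q.2) (x, y) := by
    intro y
    by_cases h : (x, y) ∈ s <;> simp [Set.indicator, h]
  simp_rw [h2]
  exact (lintegral_const_mul (f x) (hFm.comp measurable_prodMk_left)).symm

lemma map_withDensity_equiv {α β : Type*} [MeasurableSpace α] [MeasurableSpace β]
    (μ : Measure α) (e : α ≃ᵐ β) {f : α → ℝ≥0∞} (hf : Measurable f) :
    (μ.withDensity f).map e = (μ.map e).withDensity (f ∘ e.symm) := by
  ext s hs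
  rw [Measure.map_apply e.measurable hs, withDensity_apply _ (hs.preimage e.measurable),
    withDensity_apply _ hs, setLIntegral_map hs (hf.comp e.symm.measurable) e.measurable]
  refine setLIntegral_congr_fun (hs.preimage e.measurable) (fun x _ => ?_)
  simp

lemma pi_gaussian_withDensity (v : ℝ≥0) (hv : v ≠ 0) : ∀ (n : ℕ) (m : Fin n → ℝ),
    Measure.pi (fun i : Fin n => gaussianReal (m i) v)
      = (Measure.pi fun _ : Fin n => gaussianReal 0 v).withDensity
        (fun x => ENNReal.ofReal (rexp ((∑ i, m i * x i) / v - (∑ i, (m i) ^ 2) / (2 * v)))) := by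
  intro n
  induction n with
  | zero =>
    intro m
    simp only [Finset.univ_eq_empty, Finset.sum_empty, zero_div, sub_self, Real.exp_zero,
      ENNReal.ofReal_one]
    rw [show (fun _ : Fin 0 → ℝ => (1:ℝ≥0∞)) = 1 from rfl, withDensity_one]
    exact congrArg Measure.pi (funext fun i => i.elim0)
  | succ n ih =>
    intro m
    have he := measurePreserving_piFinSuccAbove (fun _ : Fin (n+1) => gaussianReal 0 v) 0
    have he' := measurePreserving_piFinSuccAbove (fun i : Fin (n+1) => gaussianReal (m i) v) 0
    simp only [Fin.succAbove_zero] at he'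
    set e := MeasurableEquiv.piFinSuccAbove (fun _ : Fin (n+1) => ℝ) 0 with he_def
    have h1 : Measure.pi (fun i : Fin (n+1) => gaussianReal (m i) v)
        = ((gaussianReal (m 0) v).prod
            (Measure.pi fun j : Fin n => gaussianReal (m (Fin.succ j)) v)).map e.symm := by
      rw [← he'.map_eq, Measure.map_map e.symm.measurable e.measurable]
      simp [Function.comp_def, Measure.map_id]
    rw [h1, gaussianReal_eq_withDensity (m 0) hv, ih (fun j => m (Fin.succ j)),
      prod_withDensity _ _ (by fun_prop) (by fun_prop),
      map_withDensity_equiv _ e.symm (by fun_prop)]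
    have h2 : ((gaussianReal 0 v).prod (Measure.pi fun _ : Fin n => gaussianReal 0 v)).map e.symm
        = Measure.pi fun _ : Fin (n+1) => gaussianReal 0 v := by
      rw [← he.map_eq, Measure.map_map e.symm.measurable e.measurable]
      simp [Function.comp_def, Measure.map_id]
    rw [h2]
    congr 1
    funext x
    simp only [Function.comp_apply, MeasurableEquiv.symm_symm]
    rw [← ENNReal.ofReal_mul (Real.exp_nonneg _), ← Real.exp_add]
    have hx1 : (e x).1 = x 0 := rfl
    have hx2 : ∀ j, (e x).2 j = x (Fin.succ j) := fun j => rfl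
    congr 1
    rw [hx1]
    simp only [hx2]
    rw [Fin.sum_univ_succ (f := fun i => m i * x i), Fin.sum_univ_succ (f := fun i => m i ^ 2)]
    have hv' : (v:ℝ) ≠ 0 := by exact_mod_cast hv
    field_simp
    ring

lemma pdf_conv_pointwise {v1 v2 : ℝ≥0} (hv1 : v1 ≠ 0) (hv2 : v2 ≠ 0) (x t : ℝ) :
    gaussianPDFReal 0 v1 x * gaussianPDFReal x v2 t
      = gaussianPDFReal 0 (v1 + v2) t * gaussianPDFReal (v1 * t / (v1 + v2)) (v1 * v2 / (v1 + v2)) x := by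
  have h1 : (v1 : ℝ) ≠ 0 := by exact_mod_cast hv1
  have h2 : (v2 : ℝ) ≠ 0 := by exact_mod_cast hv2
  have h1' : (0:ℝ) < v1 := lt_of_le_of_ne v1.coe_nonneg (Ne.symm h1)
  have h2' : (0:ℝ) < v2 := lt_of_le_of_ne v2.coe_nonneg (Ne.symm h2)
  have h12 : (0:ℝ) < (v1:ℝ) + v2 := by linarith
  simp only [gaussianPDFReal, sub_zero, NNReal.coe_add, NNReal.coe_div, NNReal.coe_mul]
  rw [mul_mul_mul_comm, ← Real.exp_add, mul_mul_mul_comm, ← Real.exp_add]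
  congr 1
  · rw [← mul_inv, ← mul_inv, ← Real.sqrt_mul (by positivity), ← Real.sqrt_mul (by positivity)]
    congr 2
    field_simp
  · congr 1
    field_simp
    ring

lemma gaussian_conv (v1 v2 : ℝ≥0) :
    Measure.map (fun p : ℝ × ℝ => p.1 + p.2) ((gaussianReal 0 v1).prod (gaussianReal 0 v2))
      = gaussianReal 0 (v1 + v2) := by
  by_cases hv1 : v1 = 0
  · subst hv1
    rw [gaussianReal_zero_var, Measure.dirac_prod, Measure.map_map (by fun_prop) (by fun_prop)]
    simp only [Function.comp_def, zero_add]
    rw [Measure.map_id']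
  by_cases hv2 : v2 = 0
  · subst hv2
    rw [gaussianReal_zero_var, Measure.prod_dirac, Measure.map_map (by fun_prop) (by fun_prop)]
    simp only [Function.comp_def, add_zero]
    rw [Measure.map_id']
  have hv12 : v1 + v2 ≠ 0 := by positivity
  ext s hs
  rw [Measure.map_apply (by fun_prop) hs, Measure.prod_apply (hs.preimage (by fun_prop))]
  have h1 : ∀ x : ℝ, (gaussianReal 0 v2) (Prod.mk x ⁻¹' ((fun p : ℝ × ℝ => p.1 + p.2) ⁻¹' s))
      = ∫⁻ t in s, gaussianPDF x v2 t := by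
    intro x
    have : Prod.mk x ⁻¹' ((fun p : ℝ × ℝ => p.1 + p.2) ⁻¹' s) = (fun y => x + y) ⁻¹' s := rfl
    rw [this, ← Measure.map_apply (by fun_prop) hs, gaussianReal_map_const_add, zero_add,
      gaussianReal_apply _ hv2]
  simp_rw [h1]
  rw [gaussianReal_of_var_ne_zero _ hv1,
    lintegral_withDensity_eq_lintegral_mul _ (measurable_gaussianPDF _ _)
      (Measurable.lintegral_prod_right' (f := fun q : ℝ × ℝ => gaussianPDF q.1 v2 q.2) ?_)]
  swap
  · apply Measurable.ennreal_ofReal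
    have : (fun q : ℝ × ℝ => gaussianPDFReal q.1 v2 q.2)
        = fun q : ℝ × ℝ => gaussianPDFReal 0 v2 (q.2 - q.1) := by
      funext q
      rw [gaussianPDFReal_sub, zero_add]
    rw [this]
    exact (measurable_gaussianPDFReal 0 v2).comp (measurable_snd.sub measurable_fst)
  · simp only [Pi.mul_apply]
    have h2 : ∀ x : ℝ, gaussianPDF 0 v1 x * ∫⁻ t in s, gaussianPDF x v2 t
        = ∫⁻ t in s, gaussianPDF 0 v1 x * gaussianPDF x v2 t := by
      intro x
      rw [lintegral_const_mul _ (measurable_gaussianPDF _ _)]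
    simp_rw [h2]
    rw [lintegral_lintegral_swap ?_]
    swap
    · apply Measurable.aemeasurable
      change Measurable ((fun q : ℝ × ℝ => gaussianPDF 0 v1 q.1) * (fun q : ℝ × ℝ => gaussianPDF q.1 v2 q.2))
      apply Measurable.mul
      · exact (measurable_gaussianPDF 0 v1).comp measurable_fst
      · apply Measurable.ennreal_ofReal
        have : (fun q : ℝ × ℝ => gaussianPDFReal q.1 v2 q.2)
            = fun q : ℝ × ℝ => gaussianPDFReal 0 v2 (q.2 - q.1) := by
          funext q
          rw [gaussianPDFReal_sub, zero_add]
        exact this ▸ (measurable_gaussianPDFReal 0 v2).comp (measurable_snd.sub measurable_fst)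
    rw [gaussianReal_apply _ hv12]
    refine setLIntegral_congr_fun hs (fun t _ => ?_)
    have h3 : ∀ x : ℝ, gaussianPDF 0 v1 x * gaussianPDF x v2 t
        = gaussianPDF 0 (v1 + v2) t * gaussianPDF (v1 * t / (v1 + v2)) (v1 * v2 / (v1 + v2)) x := by
      intro x
      simp only [gaussianPDF]
      rw [← ENNReal.ofReal_mul (gaussianPDFReal_nonneg _ _ _),
        ← ENNReal.ofReal_mul (gaussianPDFReal_nonneg _ _ _),
        pdf_conv_pointwise hv1 hv2]
    simp_rw [h3]
    rw [lintegral_const_mul _ (measurable_gaussianPDF _ _),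
      lintegral_gaussianPDF_eq_one _ (by positivity), mul_one]

lemma pi_map_linear (v : ℝ≥0) : ∀ (n : ℕ) (c : Fin n → ℝ),
    Measure.map (fun x : Fin n → ℝ => ∑ i, c i * x i)
      (Measure.pi fun _ : Fin n => gaussianReal 0 v)
      = gaussianReal 0 ((∑ i, (c i) ^ 2).toNNReal * v) := by
  intro n
  induction n with
  | zero =>
    intro c
    simp only [Finset.univ_eq_empty, Finset.sum_empty, Real.toNNReal_zero, zero_mul]
    have : (fun x : Fin 0 → ℝ => (0:ℝ)) = fun _ => 0 := rfl
    rw [Measure.map_const, gaussianReal_zero_var]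
    simp
  | succ n ih =>
    intro c
    have he := measurePreserving_piFinSuccAbove (fun _ : Fin (n+1) => gaussianReal 0 v) 0
    set e := MeasurableEquiv.piFinSuccAbove (fun _ : Fin (n+1) => ℝ) 0
    have hcomp : (fun x : Fin (n+1) → ℝ => ∑ i, c i * x i)
        = (fun p : ℝ × (Fin n → ℝ) => (fun y => c 0 * y) p.1
            + (fun y : Fin n → ℝ => ∑ j, c (Fin.succ j) * y j) p.2) ∘ e := by
      funext x
      simp only [Function.comp_apply]
      rw [Fin.sum_univ_succ]
      rfl
    rw [hcomp, ← Measure.map_map (by fun_prop) e.measurable, he.map_eq]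
    have hmp : ((gaussianReal 0 v).prod (Measure.pi fun j : Fin n => gaussianReal 0 v)).map
          (Prod.map (fun y : ℝ => c 0 * y) (fun y : Fin n → ℝ => ∑ j, c (Fin.succ j) * y j))
        = (Measure.map (fun y : ℝ => c 0 * y) (gaussianReal 0 v)).prod
          (Measure.map (fun y : Fin n → ℝ => ∑ j, c (Fin.succ j) * y j)
            (Measure.pi fun _ : Fin n => gaussianReal 0 v)) := by
      exact (Measure.map_prod_map _ _ (by fun_prop) (by fun_prop)).symm
    have hstep : (fun p : ℝ × (Fin n → ℝ) => (fun y => c 0 * y) p.1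
        + (fun y : Fin n → ℝ => ∑ j, c (Fin.succ j) * y j) p.2)
        = (fun q : ℝ × ℝ => q.1 + q.2) ∘ (Prod.map (fun y : ℝ => c 0 * y)
            (fun y : Fin n → ℝ => ∑ j, c (Fin.succ j) * y j)) := rfl
    rw [hstep, ← Measure.map_map (by fun_prop) (by fun_prop), hmp, ih,
      gaussianReal_map_const_mul, mul_zero, gaussian_conv]
    congr 1
    have h0 : (0:ℝ) ≤ ∑ j, c (Fin.succ j) ^ 2 := Finset.sum_nonneg fun j _ => sq_nonneg _
    ext
    push_cast [Real.coe_toNNReal _ (Finset.sum_nonneg fun j _ => sq_nonneg (c j)), Real.coe_toNNReal _ h0]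
    rw [Fin.sum_univ_succ]
    ring

lemma gauss_one_Ici (c : ℝ) :
    gaussianReal 0 1 (Set.Ici c) = ENNReal.ofReal (stdNormalCDF (-c)) := by
  have hneg : Measure.map (fun x : ℝ => -x) (gaussianReal 0 1) = gaussianReal 0 1 := by
    have h := gaussianReal_map_const_mul (μ := 0) (v := 1) (-1)
    have h1 : (fun x : ℝ => -x) = fun x : ℝ => (-1) * x := by funext x; ring
    have h2 : (⟨(-1 : ℝ)^2, sq_nonneg _⟩ : ℝ≥0) * 1 = 1 := by ext; norm_num
    rw [h1, h]
    rw [mul_zero]; congr 1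
  have hpre : (fun x : ℝ => -x) ⁻¹' Set.Iic (-c) = Set.Ici c := by
    ext x
    simp [neg_le_neg_iff, Set.mem_Iic, Set.mem_Ici, neg_le]
  rw [stdNormalCDF, ENNReal.ofReal_toReal (measure_ne_top _ _), ← hpre,
    ← Measure.map_apply (by fun_prop) measurableSet_Iic, hneg]

lemma gauss_scale_Ici {s : ℝ} (hs : 0 < s) (a : ℝ) :
    gaussianReal 0 ((s ^ 2).toNNReal) (Set.Ici a)
      = ENNReal.ofReal (stdNormalCDF (-(a / s))) := by
  have h := gaussianReal_map_const_mul (μ := 0) (v := 1) s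
  have h2 : (⟨(s : ℝ)^2, sq_nonneg _⟩ : ℝ≥0) * 1 = (s ^ 2).toNNReal := by
    ext; simp [Real.coe_toNNReal _ (sq_nonneg s)]
  replace h : Measure.map (fun x : ℝ => s * x) (gaussianReal 0 1) = gaussianReal 0 ((s ^ 2).toNNReal) := by
    rw [h, mul_zero]; congr 1
  have hpre : (fun x : ℝ => s * x) ⁻¹' Set.Ici a = Set.Ici (a / s) := by
    ext x
    simp only [Set.mem_preimage, Set.mem_Ici]
    rw [div_le_iff₀ hs]
    constructor <;> intro <;> linarith [mul_comm s x]
  rw [← h, Measure.map_apply (by fun_prop) measurableSet_Ici, hpre, gauss_one_Ici]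

/-- Neyman-Pearson type monotone rearrangement bound. -/

lemma np_bound {α : Type*} [MeasurableSpace α] (μ : Measure α) [IsFiniteMeasure μ]
    {T : α → ℝ} (hT : Measurable T) {φ : ℝ → ℝ≥0∞} (hφm : Measurable φ)
    (hmono : Monotone φ) {A : Set α} (hA : MeasurableSet A) (a : ℝ)
    (hle : μ A ≤ μ (T ⁻¹' Set.Ici a)) :
    ∫⁻ x in A, φ (T x) ∂μ ≤ ∫⁻ x in T ⁻¹' Set.Ici a, φ (T x) ∂μ := by
  set H := T ⁻¹' Set.Ici a with hH_def
  have hH : MeasurableSet H := hT measurableSet_Ici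
  have hφT : Measurable fun x => φ (T x) := hφm.comp hT
  have hAsplit : ∫⁻ x in A, φ (T x) ∂μ
      = ∫⁻ x in A ∩ H, φ (T x) ∂μ + ∫⁻ x in A \ H, φ (T x) ∂μ := by
    rw [← lintegral_union (hA.diff hH)
        (disjoint_sdiff_self_right.mono_left Set.inter_subset_right), Set.inter_union_diff]
  have hHsplit : ∫⁻ x in H, φ (T x) ∂μ
      = ∫⁻ x in A ∩ H, φ (T x) ∂μ + ∫⁻ x in H \ A, φ (T x) ∂μ := by
    rw [Set.inter_comm, ← lintegral_union (hH.diff hA)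
        (disjoint_sdiff_self_right.mono_left Set.inter_subset_right), Set.inter_union_diff]
  have hmeas_diff : μ (A \ H) ≤ μ (H \ A) := by
    have h1 : μ (A \ H) + μ (A ∩ H) = μ A := measure_diff_add_inter A hH
    have h2 : μ (H \ A) + μ (H ∩ A) = μ H := measure_diff_add_inter H hA
    rw [Set.inter_comm] at h2
    have := h1.trans_le (hle.trans h2.symm.le)
    exact ENNReal.le_of_add_le_add_right (measure_ne_top μ _) this
  have hub : ∫⁻ x in A \ H, φ (T x) ∂μ ≤ φ a * μ (A \ H) := by
    calc ∫⁻ x in A \ H, φ (T x) ∂μ ≤ ∫⁻ _ in A \ H, φ a ∂μ := by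
          refine setLIntegral_mono measurable_const fun x hx => ?_
          exact hmono (le_of_not_ge fun hc => hx.2 hc)
      _ = φ a * μ (A \ H) := by rw [setLIntegral_const]
  have hlb : φ a * μ (H \ A) ≤ ∫⁻ x in H \ A, φ (T x) ∂μ := by
    calc φ a * μ (H \ A) = ∫⁻ _ in H \ A, φ a ∂μ := by rw [setLIntegral_const]
      _ ≤ ∫⁻ x in H \ A, φ (T x) ∂μ := by
          refine setLIntegral_mono hφT fun x hx => hmono hx.1
  calc ∫⁻ x in A, φ (T x) ∂μ
      = ∫⁻ x in A ∩ H, φ (T x) ∂μ + ∫⁻ x in A \ H, φ (T x) ∂μ := hAsplit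
    _ ≤ ∫⁻ x in A ∩ H, φ (T x) ∂μ + φ a * μ (A \ H) := by gcongr
    _ ≤ ∫⁻ x in A ∩ H, φ (T x) ∂μ + φ a * μ (H \ A) := by gcongr
    _ ≤ ∫⁻ x in A ∩ H, φ (T x) ∂μ + ∫⁻ x in H \ A, φ (T x) ∂μ := by gcongr
    _ = ∫⁻ x in H, φ (T x) ∂μ := hHsplit.symm

end Auxiliary


set_option maxHeartbeats 1000000 in
theorem smoothed_upper_bound_shift
    (d : ℕ) (hd : 1 ≤ d) (σ : ℝ) (hσ : 0 < σ)
    {Y : Type*} [MeasurableSpace Y]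
    (f : EuclideanSpace ℝ (Fin d) → Y) (hf : Measurable f)
    (R : Set Y) (hR : MeasurableSet R)
    (z δ : EuclideanSpace ℝ (Fin d)) (b : ℝ)
    (h : isoGaussian d 0 σ {ε | f (z + ε) ∈ R} ≤ ENNReal.ofReal (stdNormalCDF b)) :
    isoGaussian d 0 σ {ε | f (z + δ + ε) ∈ R} ≤
      ENNReal.ofReal (stdNormalCDF (b + ‖δ‖ / σ)) := by
  by_cases hδ : δ = 0
  · subst hδ
    simpa [norm_zero, zero_div] using h
  -- setup
  set V : ℝ≥0 := (σ ^ 2).toNNReal with hV_def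
  have hVne : V ≠ 0 := by
    simp only [hV_def, ne_eq, Real.toNNReal_eq_zero, not_le]
    positivity
  have hVr : (V : ℝ) = σ ^ 2 := Real.coe_toNNReal _ (sq_nonneg σ)
  set emap : (Fin d → ℝ) ≃ᵐ EuclideanSpace ℝ (Fin d) :=
    (MeasurableEquiv.toLp 2 (Fin d → ℝ)) with hemap_def
  set μ0 : Measure (Fin d → ℝ) := Measure.pi fun _ : Fin d => gaussianReal 0 V with hμ0_def
  have hiso0 : isoGaussian d 0 σ = μ0.map emap := by
    rw [isoGaussian]
    congr 1
  set w : Fin d → ℝ := fun i => δ i with hw_def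
  set N : ℝ := ‖δ‖ with hN_def
  have hN : 0 < N := norm_pos_iff.mpr hδ
  have hsum : ∑ i, w i ^ 2 = N ^ 2 := by
    rw [hN_def, EuclideanSpace.norm_eq, Real.sq_sqrt (by positivity)]
    exact Finset.sum_congr rfl fun i _ => by rw [Real.norm_eq_abs, sq_abs]
  set T : (Fin d → ℝ) → ℝ := fun y => ∑ i, w i * y i with hT_def
  have hTmeas : Measurable T := by
    apply Finset.measurable_sum
    intro i _
    exact (measurable_pi_apply i).const_mul _
  -- sets
  set A0 : Set (Fin d → ℝ) := {y | f (z + emap y) ∈ R} with hA0_def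
  have hzmeas : Measurable fun y : Fin d → ℝ => z + emap y := emap.measurable.const_add z
  have hA0 : MeasurableSet A0 := (hf.comp hzmeas) hR
  set A : Set (Fin d → ℝ) := {y | f (z + δ + emap y) ∈ R} with hA_def
  have hA : MeasurableSet A := (hf.comp (emap.measurable.const_add (z + δ))) hR
  -- hypothesis in pi form
  have hmap0 : isoGaussian d 0 σ {ε | f (z + ε) ∈ R} = μ0 A0 := by
    rw [hiso0, MeasurableEquiv.map_apply]
    rfl
  have hmapδ : isoGaussian d 0 σ {ε | f (z + δ + ε) ∈ R} = μ0 A := by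
    rw [hiso0, MeasurableEquiv.map_apply]
    rfl
  -- shift
  have hshift : A = (fun y => w + y) ⁻¹' A0 := by
    ext y
    have : emap (w + y) = δ + emap y := rfl
    simp only [hA_def, hA0_def, Set.mem_setOf_eq, Set.mem_preimage, this]
    rw [add_assoc]
  have hμw : Measure.map (fun y => w + y) μ0 = Measure.pi fun i => gaussianReal (w i) V := by
    have := measurePreserving_pi (fun _ : Fin d => gaussianReal 0 V)
      (fun i => gaussianReal (w i) V) (f := fun i (x : ℝ) => w i + x)
      (fun i => ⟨by fun_prop, by rw [gaussianReal_map_const_add, zero_add]⟩)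
    exact this.map_eq
  have hμA : μ0 A = (Measure.pi fun i => gaussianReal (w i) V) A0 := by
    rw [hshift, ← Measure.map_apply (by fun_prop) hA0, hμw]
  -- density
  set φ : ℝ → ℝ≥0∞ := fun t => ENNReal.ofReal (rexp (t / V - (N ^ 2) / (2 * V))) with hφ_def
  have hφm : Measurable φ := by fun_prop
  have hφmono : Monotone φ := by
    intro s t hst
    apply ENNReal.ofReal_le_ofReal
    apply Real.exp_le_exp.mpr
    have : (0:ℝ) < V := lt_of_le_of_ne V.coe_nonneg (by exact_mod_cast hVne.symm)
    gcongr
  have hdens : (Measure.pi fun i => gaussianReal (w i) V) = μ0.withDensity fun y => φ (T y) := by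
    rw [pi_gaussian_withDensity V hVne d w, hμ0_def]
    congr 1
    funext y
    rw [hφ_def, hT_def, hsum]
  have hμA2 : μ0 A = ∫⁻ y in A0, φ (T y) ∂μ0 := by
    rw [hμA, hdens, withDensity_apply _ hA0]
  -- half space
  set a : ℝ := -(σ * N * b) with ha_def
  set H : Set (Fin d → ℝ) := T ⁻¹' Set.Ici a with hH_def
  have hV2 : ((∑ i, (w i) ^ 2).toNNReal * V) = ((σ * N) ^ 2).toNNReal := by
    rw [hsum]
    ext
    rw [NNReal.coe_mul, Real.coe_toNNReal _ (by positivity), hVr,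
      Real.coe_toNNReal _ (by positivity)]
    ring
  have hmapT : Measure.map T μ0 = gaussianReal 0 (((σ * N) ^ 2).toNNReal) := by
    rw [hμ0_def, pi_map_linear V d w, hV2]
  have hμH : μ0 H = ENNReal.ofReal (stdNormalCDF b) := by
    rw [hH_def, ← Measure.map_apply hTmeas measurableSet_Ici, hmapT,
      gauss_scale_Ici (by positivity)]
    congr 2
    rw [ha_def]
    field_simp
  -- integral over halfspace
  have hφ_pdf : ∀ t : ℝ, gaussianPDF 0 (((σ * N) ^ 2).toNNReal) t * φ t
      = gaussianPDF (N ^ 2) (((σ * N) ^ 2).toNNReal) t := by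
    intro t
    have hvne : ((σ * N) ^ 2).toNNReal ≠ 0 := by
      simp only [ne_eq, Real.toNNReal_eq_zero, not_le]
      positivity
    have hvr : ((((σ * N) ^ 2).toNNReal : ℝ≥0) : ℝ) = (σ * N) ^ 2 :=
      Real.coe_toNNReal _ (by positivity)
    have he : t / (V:ℝ) - N ^ 2 / (2 * (V:ℝ))
        = (N ^ 2) * t / ((((σ * N) ^ 2).toNNReal : ℝ≥0) : ℝ)
          - (N ^ 2) ^ 2 / (2 * ((((σ * N) ^ 2).toNNReal : ℝ≥0) : ℝ)) := by
      rw [hvr, hVr]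
      field_simp
    simp only [gaussianPDF, hφ_def]
    rw [he, ← ENNReal.ofReal_mul (gaussianPDFReal_nonneg _ _ _), mul_comm,
      ← pdf_ratio (N ^ 2) hvne t]
  have hHint : ∫⁻ y in H, φ (T y) ∂μ0 = ENNReal.ofReal (stdNormalCDF (b + N / σ)) := by
    rw [hH_def, ← setLIntegral_map measurableSet_Ici hφm hTmeas, hmapT]
    have hvne : ((σ * N) ^ 2).toNNReal ≠ 0 := by
      simp only [ne_eq, Real.toNNReal_eq_zero, not_le]
      positivity
    rw [gaussianReal_of_var_ne_zero _ hvne, restrict_withDensity measurableSet_Ici,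
      lintegral_withDensity_eq_lintegral_mul _ (measurable_gaussianPDF _ _) hφm]
    simp only [Pi.mul_apply]
    have : ∫⁻ t in Set.Ici a, gaussianPDF 0 (((σ * N) ^ 2).toNNReal) t * φ t
        = ∫⁻ t in Set.Ici a, gaussianPDF (N ^ 2) (((σ * N) ^ 2).toNNReal) t := by
      refine setLIntegral_congr_fun measurableSet_Ici (fun t _ => hφ_pdf t)
    have hshift1 : gaussianReal (N ^ 2) (((σ * N) ^ 2).toNNReal)
        = (gaussianReal 0 (((σ * N) ^ 2).toNNReal)).map (· + N ^ 2) := by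
      rw [gaussianReal_map_add_const, zero_add]
    rw [this, ← gaussianReal_apply _ hvne, hshift1,
      Measure.map_apply (by fun_prop) measurableSet_Ici]
    have hpre : (fun x : ℝ => x + N ^ 2) ⁻¹' Set.Ici a = Set.Ici (a - N ^ 2) := by
      ext x
      simp only [Set.mem_preimage, Set.mem_Ici]
      constructor <;> intro <;> linarith
    rw [hpre, gauss_scale_Ici (by positivity)]
    congr 2
    rw [ha_def]
    field_simp
    ring
  -- conclude
  rw [hmapδ, hμA2, ← hHint]
  apply np_bound μ0 hTmeas hφm hφmono hA0 a
  rw [hμH, ← hmap0]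
  exact h
end

section
/- (Neyman–Pearson comparison lemma, sublevel form.) Let (Ω, 𝒜) be a measurable space, ν a σ-finite measure on Ω, and let P = ν.withDensity p and Q = ν.withDensity q be probability measures with measurable densities p, q : Ω → ℝ≥0∞. Fix t ∈ ℝ≥0∞ and let S = {x : q(x) ≤ t · p(x)}. Then for every measurable set S′ with P(S′) ≥ P(S), one has Q(S′) ≥ Q(S); equivalently, among all measurable sets of at least a given P-probability, the likelihood-ratio sublevel set minimizes the Q-probability. -/
open MeasureTheory

/-- Neyman–Pearson comparison lemma, sublevel form: among all measurable sets of at least a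
given `P`-probability, the likelihood-ratio sublevel set minimizes the `Q`-probability. -/
theorem neymanPearson_sublevel
    {Ω : Type*} [MeasurableSpace Ω] (ν : Measure Ω) [SigmaFinite ν]
    (p q : Ω → ENNReal) (hp : Measurable p) (hq : Measurable q)
    [IsProbabilityMeasure (ν.withDensity p)] [IsProbabilityMeasure (ν.withDensity q)]
    (t : ENNReal) (S' : Set Ω) (hS' : MeasurableSet S')
    (h : ν.withDensity p S' ≥ ν.withDensity p {x | q x ≤ t * p x}) :
    ν.withDensity q S' ≥ ν.withDensity q {x | q x ≤ t * p x} := by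
  set S : Set Ω := {x | q x ≤ t * p x} with hSdef
  have hS : MeasurableSet S := measurableSet_le hq (hp.const_mul t)
  set P := ν.withDensity p with hP
  set Q := ν.withDensity q with hQ
  -- P (S \ S') ≤ P (S' \ S)
  have hPdiff : P (S \ S') ≤ P (S' \ S) := by
    have h1 : P (S ∩ S') + P (S \ S') = P S := measure_inter_add_diff S hS'
    have h2 : P (S' ∩ S) + P (S' \ S) = P S' := measure_inter_add_diff S' hS
    rw [Set.inter_comm] at h2
    have h3 : P (S ∩ S') + P (S \ S') ≤ P (S ∩ S') + P (S' \ S) := by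
      rw [h1, h2]; exact h
    exact (ENNReal.add_le_add_iff_left (measure_ne_top P _)).mp h3
  -- Q (S \ S') ≤ t * P (S \ S')
  have hQ1 : Q (S \ S') ≤ t * P (S \ S') := by
    rw [hQ, hP, withDensity_apply q (hS.diff hS'), withDensity_apply p (hS.diff hS'),
      ← lintegral_const_mul t hp]
    refine setLIntegral_mono (hp.const_mul t) fun x hx => hx.1
  -- t * P (S' \ S) ≤ Q (S' \ S)
  have hQ2 : t * P (S' \ S) ≤ Q (S' \ S) := by
    rw [hQ, hP, withDensity_apply q (hS'.diff hS), withDensity_apply p (hS'.diff hS),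
      ← lintegral_const_mul t hp]
    refine setLIntegral_mono hq fun x hx => (not_le.mp hx.2).le
  have key : Q (S \ S') ≤ Q (S' \ S) :=
    hQ1.trans <| (mul_le_mul_right hPdiff t).trans hQ2
  calc Q S = Q (S ∩ S') + Q (S \ S') := (measure_inter_add_diff S hS').symm
    _ ≤ Q (S ∩ S') + Q (S' \ S) := add_le_add_right key _
    _ = Q (S' ∩ S) + Q (S' \ S) := by rw [Set.inter_comm]
    _ = Q S' := measure_inter_add_diff S' hS
end
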